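/- If x is a positive integer that is smaller than every prime factor of a₁ and x ≤ a₁ − 1, then ⌊ω_x/a₁⌋ ≤ x·⌊ω₁/a₁⌋ + x − 1. -/
import Mathlib


theorem stmt6
    (d : ℕ) (hd : 2 ≤ d)
    (a : Fin d → ℕ)
    (ha_pos : ∀ i, 0 < a i)
    (ha_mono : StrictMono a)
    (ha_gcd : Finset.univ.gcd a = 1)
    (a1 : ℕ) (ha1 : a1 = a ⟨0, by omega⟩)
    (S : Set ℕ)
    (hS : S = {m : ℕ | ∃ c : Fin d → ℕ, m = ∑ i, c i * a i})
    (hmin : ∀ j : Fin d, ¬ ∃ c : Fin d → ℕ, c j = 0 ∧ a j = ∑ i, c i * a i)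
    (F : ℕ) (hF : F ∉ S) (hFmax : ∀ m : ℕ, F < m → m ∈ S)
    (ω : ℕ → ℕ)
    (hω_mono : ∀ i j : ℕ, i < j → j < a1 → ω i < ω j)
    (hω_range : ω '' Set.Iio a1 = {w ∈ S | ¬ ∃ s ∈ S, s + a1 = w})
    (x : ℕ) (hx : 0 < x) (hxp : ∀ p : ℕ, p.Prime → p ∣ a1 → x < p)
    (hxa : x ≤ a1 - 1)
    :
    ((ω x / a1 : ℕ) : ℤ) ≤ (x : ℤ) * ((ω 1 / a1 : ℕ) : ℤ) + (x : ℤ) - 1 := by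
  classical
  set j0 : Fin d := ⟨0, by omega⟩ with hj0
  have ha1pos : 0 < a1 := ha1 ▸ ha_pos j0
  have hxa1 : x < a1 := by omega
  have h1a1 : 1 < a1 := by omega
  -- basic facts about S
  have hSadd : ∀ m n, m ∈ S → n ∈ S → m + n ∈ S := by
    subst hS
    rintro m n ⟨c, rfl⟩ ⟨c', rfl⟩
    exact ⟨c + c', by simp [add_mul, Finset.sum_add_distrib]⟩
  have h0S : (0 : ℕ) ∈ S := by
    subst hS; exact ⟨0, by simp⟩
  have hmulS : ∀ k : ℕ, k * a1 ∈ S := by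
    subst hS
    intro k
    refine ⟨fun i => if i = j0 then k else 0, ?_⟩
    rw [Finset.sum_eq_single j0]
    · simp [ha1]
    · intro b _ hb; simp [hb]
    · simp
  -- Apery facts
  have hωmem : ∀ i, i < a1 → ω i ∈ S ∧ ¬ ∃ s ∈ S, s + a1 = ω i := by
    intro i hi
    have : ω i ∈ {w ∈ S | ¬ ∃ s ∈ S, s + a1 = w} := hω_range ▸ ⟨i, hi, rfl⟩
    exact this
  have hωsurj : ∀ w, w ∈ S → (¬ ∃ s ∈ S, s + a1 = w) → ∃ i, i < a1 ∧ ω i = w := by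
    intro w hw1 hw2
    have : w ∈ ω '' Set.Iio a1 := hω_range ▸ ⟨hw1, hw2⟩
    obtain ⟨i, hi, hiw⟩ := this
    exact ⟨i, hi, hiw⟩
  have hω0 : ω 0 = 0 := by
    obtain ⟨i, hi, hiw⟩ := hωsurj 0 h0S (by rintro ⟨s, _, h⟩; omega)
    rcases Nat.eq_zero_or_pos i with h | h
    · rw [h] at hiw; exact hiw
    · have := hω_mono 0 i h hi; omega
  have hω1pos : 0 < ω 1 := by have := hω_mono 0 1 one_pos h1a1; omega
  have hω1S : ω 1 ∈ S := (hωmem 1 h1a1).1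
  have hnd : ¬ a1 ∣ ω 1 := by
    rintro ⟨k, hk⟩
    have hk1 : 1 ≤ k := by
      rcases Nat.eq_zero_or_pos k with h | h
      · subst h; simp at hk; omega
      · exact h
    obtain ⟨t, rfl⟩ : ∃ t, k = t + 1 := ⟨k - 1, by omega⟩
    refine (hωmem 1 h1a1).2 ⟨t * a1, hmulS t, ?_⟩
    have he : a1 * (t + 1) = t * a1 + a1 := by ring
    omega
  -- Apery representative in each residue class of an element of S
  have hrep : ∀ n, n ∈ S → ∃ w, (w ∈ S ∧ ¬ ∃ s ∈ S, s + a1 = w) ∧ w ≤ n ∧ w % a1 = n % a1 := by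
    intro n hn
    have hex : ∃ m, m ∈ S ∧ m % a1 = n % a1 := ⟨n, hn, rfl⟩
    set w := Nat.find hex with hw
    obtain ⟨hwS, hwmod⟩ := Nat.find_spec hex
    refine ⟨w, ⟨hwS, ?_⟩, Nat.find_le ⟨hn, rfl⟩, hwmod⟩
    rintro ⟨s, hsS, hsw⟩
    have hsmod : s % a1 = n % a1 := by
      have : (s + a1) % a1 = s % a1 := Nat.add_mod_right s a1
      rw [hsw] at this
      exact this.symm.trans hwmod
    have hslt : s < w := hsw ▸ Nat.lt_add_of_pos_right ha1pos
    exact Nat.find_min hex hslt ⟨hsS, hsmod⟩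
  -- Apery elements are determined by residue
  have hinjres : ∀ w w', (w ∈ S ∧ ¬ ∃ s ∈ S, s + a1 = w) →
      (w' ∈ S ∧ ¬ ∃ s ∈ S, s + a1 = w') → w % a1 = w' % a1 → w = w' := by
    have key : ∀ w w', (w ∈ S ∧ ¬ ∃ s ∈ S, s + a1 = w) →
        (w' ∈ S ∧ ¬ ∃ s ∈ S, s + a1 = w') → w % a1 = w' % a1 → w < w' → False := by
      intro w w' hw hw' hmod hlt
      have hdvd : a1 ∣ (w' - w) :=
        (Nat.modEq_iff_dvd' (le_of_lt hlt)).mp hmod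
      obtain ⟨m, hm⟩ := hdvd
      have hm1 : 1 ≤ m := by
        rcases Nat.eq_zero_or_pos m with h | h
        · subst h; simp at hm; omega
        · exact h
      obtain ⟨t, rfl⟩ : ∃ t, m = t + 1 := ⟨m - 1, by omega⟩
      refine hw'.2 ⟨w + t * a1, hSadd _ _ hw.1 (hmulS t), ?_⟩
      have he : a1 * (t + 1) = t * a1 + a1 := by ring
      omega
    intro w w' hw hw' hmod
    rcases lt_trichotomy w w' with h | h | h
    · exact absurd (key w w' hw hw' hmod h) id
    · exact h
    · exact absurd (key w' w hw' hw hmod.symm h) id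
  -- multiples of ω 1 are in S
  have hkmulS : ∀ k : ℕ, k * ω 1 ∈ S := by
    intro k
    induction k with
    | zero => simpa using h0S
    | succ t ih =>
      have : (t + 1) * ω 1 = t * ω 1 + ω 1 := by ring
      rw [this]; exact hSadd _ _ ih hω1S
  -- distinct residues of k * ω 1 for k ≤ x
  have hkres : ∀ j k : ℕ, j < k → k ≤ x → (j * ω 1) % a1 ≠ (k * ω 1) % a1 := by
    intro j k hjk hkx heq
    have hle : j * ω 1 ≤ k * ω 1 := Nat.mul_le_mul_right _ (le_of_lt hjk)
    have hdvd : a1 ∣ (k * ω 1 - j * ω 1) :=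
      (Nat.modEq_iff_dvd' hle).mp heq
    have hsub : k * ω 1 - j * ω 1 = (k - j) * ω 1 := by
      rw [Nat.sub_mul]
    rw [hsub] at hdvd
    have hcop : Nat.Coprime a1 (k - j) := by
      by_contra hnc
      obtain ⟨p, hp, hpd⟩ := Nat.exists_prime_and_dvd (n := Nat.gcd a1 (k - j))
        (by simpa [Nat.Coprime] using hnc)
      have hp1 : p ∣ a1 := hpd.trans (Nat.gcd_dvd_left _ _)
      have hp2 : p ∣ (k - j) := hpd.trans (Nat.gcd_dvd_right _ _)
      have hxlt : x < p := hxp p hp hp1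
      have : p ≤ k - j := Nat.le_of_dvd (by omega) hp2
      omega
    exact hnd (hcop.dvd_of_dvd_mul_left hdvd)
  -- choose the Apery element index in class of k * ω 1
  have hks : ∀ k : ℕ, ∃ i, i < a1 ∧ ω i % a1 = (k * ω 1) % a1 ∧ ω i ≤ k * ω 1 := by
    intro k
    obtain ⟨w, hwAp, hwle, hwmod⟩ := hrep _ (hkmulS k)
    obtain ⟨i, hia, rfl⟩ := hωsurj w hwAp.1 hwAp.2
    exact ⟨i, hia, hwmod, hwle⟩
  choose f hf1 hf2 hf3 using hks
  -- f is injective on 0..x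
  have hfinj : ∀ j k, j ≤ x → k ≤ x → f j = f k → j = k := by
    intro j k hj hk hjk
    by_contra hne
    rcases lt_trichotomy j k with h | h | h
    · exact hkres j k h hk (by rw [← hf2 j, ← hf2 k, hjk])
    · exact hne h
    · exact hkres k j h hj (by rw [← hf2 j, ← hf2 k, hjk])
  -- there is some k ≤ x with x ≤ f k
  have hbig : ∃ k, k ≤ x ∧ x ≤ f k := by
    by_contra hno
    push_neg at hno
    have hmap : ∀ k ∈ Finset.range (x + 1), f k ∈ Finset.range x := by
      intro k hk
      simp only [Finset.mem_range] at hk ⊢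
      exact hno k (by omega)
    have hinj : Set.InjOn f ↑(Finset.range (x + 1)) := by
      intro j hj k hk hjk
      simp only [Finset.coe_range, Set.mem_Iio] at hj hk
      exact hfinj j k (by omega) (by omega) hjk
    have := Finset.card_le_card_of_injOn f hmap hinj
    simp at this
  obtain ⟨k, hkx, hfk⟩ := hbig
  -- key inequality : ω x ≤ x * ω 1
  have hkey : ω x ≤ x * ω 1 := by
    have h1 : ω x ≤ ω (f k) := by
      rcases eq_or_lt_of_le hfk with h | h
      · rw [← h]
      · exact le_of_lt (hω_mono x (f k) h (hf1 k))
    have h2 : ω (f k) ≤ k * ω 1 := hf3 k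
    have h3 : k * ω 1 ≤ x * ω 1 := Nat.mul_le_mul_right _ hkx
    omega
  -- final arithmetic
  have hmodpos : 1 ≤ ω 1 % a1 := by
    rcases Nat.eq_zero_or_pos (ω 1 % a1) with h | h
    · exact absurd (Nat.dvd_of_mod_eq_zero h) hnd
    · exact h
  have hmodlt : ω 1 % a1 < a1 := Nat.mod_lt _ ha1pos
  have hsplit : (x * ω 1) / a1 = x * (ω 1 / a1) + (x * (ω 1 % a1)) / a1 := by
    have e1 : x * ω 1 = x * (ω 1 % a1) + x * (ω 1 / a1) * a1 := by
      rw [mul_assoc, ← Nat.mul_add, Nat.mod_add_div']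
    rw [e1, Nat.add_mul_div_right _ _ ha1pos]
    omega
  have hfrac : (x * (ω 1 % a1)) / a1 ≤ x - 1 := by
    have h1 : x * (ω 1 % a1) < x * a1 := mul_lt_mul_of_pos_left hmodlt hx
    have h1' : x * (ω 1 % a1) < a1 * x := (mul_comm x a1) ▸ h1
    have h2 := Nat.div_lt_of_lt_mul h1'
    omega
  have hnat : ω x / a1 ≤ x * (ω 1 / a1) + (x - 1) := by
    have h1 : ω x / a1 ≤ (x * ω 1) / a1 := Nat.div_le_div_right hkey
    omega
  calc ((ω x / a1 : ℕ) : ℤ) ≤ ((x * (ω 1 / a1) + (x - 1) : ℕ) : ℤ) := by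
        exact_mod_cast hnat
    _ = (x : ℤ) * ((ω 1 / a1 : ℕ) : ℤ) + (x : ℤ) - 1 := by
        push_cast [Nat.cast_sub hx]
        ring
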